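/- Let R be a weakly semihereditary ring: for all positive integers p, q, r and all matrices A of size p×q and B of size q×r over R with AB = 0, there exists an idempotent q×q matrix E (E² = E) with AE = A and EB = 0. Then every submodule of every flat right R-module is flat (R has weak global dimension at most 1). -/

import Mathlib

open CategoryTheory CategoryTheory.Limits HomologicalComplex TensorProduct

universe u

/-- The balancing relations inside `M ⊗[ℤ] N` for a right `R`-module `M` and a left
`R`-module `N`. -/
def balanceRel (R : Type u) [Ring R] (M : Type u) [AddCommGroup M] [Module Rᵐᵒᵖ M]
    (N : Type u) [AddCommGroup N] [Module R N] : Submodule ℤ (M ⊗[ℤ] N) :=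
  Submodule.span ℤ {z | ∃ (m : M) (r : R) (n : N),
    z = (MulOpposite.op r • m) ⊗ₜ[ℤ] n - m ⊗ₜ[ℤ] (r • n)}

/-- The tensor product `M ⊗[R] N` of a right `R`-module and a left `R`-module. -/
def RTensor (R : Type u) [Ring R] (M : Type u) [AddCommGroup M] [Module Rᵐᵒᵖ M]
    (N : Type u) [AddCommGroup N] [Module R N] : Type u :=
  (M ⊗[ℤ] N) ⧸ balanceRel R M N

noncomputable instance (R : Type u) [Ring R] (M : Type u) [AddCommGroup M] [Module Rᵐᵒᵖ M]
    (N : Type u) [AddCommGroup N] [Module R N] : AddCommGroup (RTensor R M N) :=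
  inferInstanceAs (AddCommGroup ((M ⊗[ℤ] N) ⧸ balanceRel R M N))

/-- The map `M ⊗[R] N → M ⊗[R] N'` induced by an `R`-linear map `N → N'`. -/
noncomputable def rTensorMap (R : Type u) [Ring R]
    (M : Type u) [AddCommGroup M] [Module Rᵐᵒᵖ M]
    {N N' : Type u} [AddCommGroup N] [Module R N] [AddCommGroup N'] [Module R N']
    (f : N →ₗ[R] N') : RTensor R M N →ₗ[ℤ] RTensor R M N' :=
  Submodule.mapQ (balanceRel R M N) (balanceRel R M N')
    (TensorProduct.map LinearMap.id (f.restrictScalars ℤ)) (by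
      unfold balanceRel
      refine Submodule.span_le.2 ?_
      rintro z ⟨m, r, n, rfl⟩
      rw [SetLike.mem_coe]
      refine Submodule.mem_comap.2 ?_
      refine Submodule.subset_span ⟨m, r, f n, ?_⟩
      erw [map_sub, TensorProduct.map_tmul, TensorProduct.map_tmul]
      simp)

/-- A right `R`-module `M` is flat if tensoring with `M` over `R` preserves injectivity
of maps of left `R`-modules. -/
def IsFlatRight (R : Type u) [Ring R] (M : Type u) [AddCommGroup M] [Module Rᵐᵒᵖ M] : Prop :=
  ∀ (N N' : Type u) [AddCommGroup N] [Module R N] [AddCommGroup N'] [Module R N']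
    (f : N →ₗ[R] N'), Function.Injective f → Function.Injective (rTensorMap R M f)

/-- `R` has weak global dimension at most `1`: every submodule of every flat right
`R`-module is flat. -/
def WeakGlobalDimLE1 (R : Type u) [Ring R] : Prop :=
  ∀ (M : Type u) [AddCommGroup M] [Module Rᵐᵒᵖ M], IsFlatRight R M →
    ∀ N : Submodule Rᵐᵒᵖ M, IsFlatRight R ↥N

namespace WGDAux

variable {R : Type u} [Ring R]

section basic
variable (R)
variable (M : Type u) [AddCommGroup M] [Module Rᵐᵒᵖ M]
variable (N : Type u) [AddCommGroup N] [Module R N]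

noncomputable instance : Module ℤ (RTensor R M N) :=
  inferInstanceAs (Module ℤ ((M ⊗[ℤ] N) ⧸ balanceRel R M N))

/-- class of a pure tensor in `RTensor`. -/
noncomputable def tmk (m : M) (n : N) : RTensor R M N :=
  Submodule.Quotient.mk (m ⊗ₜ[ℤ] n)

lemma tmk_balance (m : M) (r : R) (n : N) :
    tmk R M N (MulOpposite.op r • m) n = tmk R M N m (r • n) := by
  unfold tmk
  exact (Submodule.Quotient.eq (balanceRel R M N)).2 (Submodule.subset_span ⟨m, r, n, rfl⟩)

lemma tmk_add_left (m m' : M) (n : N) :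
    tmk R M N (m + m') n = tmk R M N m n + tmk R M N m' n := by
  unfold tmk; rw [TensorProduct.add_tmul, Submodule.Quotient.mk_add]; rfl

lemma tmk_add_right (m : M) (n n' : N) :
    tmk R M N m (n + n') = tmk R M N m n + tmk R M N m n' := by
  unfold tmk; rw [TensorProduct.tmul_add, Submodule.Quotient.mk_add]; rfl

lemma tmk_zero_left (n : N) : tmk R M N 0 n = 0 := by
  unfold tmk; rw [TensorProduct.zero_tmul]; rfl

lemma tmk_zero_right (m : M) : tmk R M N m 0 = 0 := by
  unfold tmk; rw [TensorProduct.tmul_zero]; rfl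

lemma tmk_sum_left {ι : Type*} (s : Finset ι) (m : ι → M) (n : N) :
    tmk R M N (∑ i ∈ s, m i) n = ∑ i ∈ s, tmk R M N (m i) n := by
  classical
  induction s using Finset.induction_on with
  | empty => simp [tmk_zero_left]
  | insert _ _ h ih => rw [Finset.sum_insert h, Finset.sum_insert h, tmk_add_left, ih]

lemma tmk_sum_right {ι : Type*} (s : Finset ι) (m : M) (n : ι → N) :
    tmk R M N m (∑ i ∈ s, n i) = ∑ i ∈ s, tmk R M N m (n i) := by
  classical
  induction s using Finset.induction_on with
  | empty => simp [tmk_zero_right]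
  | insert _ _ h ih => rw [Finset.sum_insert h, Finset.sum_insert h, tmk_add_right, ih]

lemma rTensorMap_tmk {N' : Type u} [AddCommGroup N'] [Module R N'] (f : N →ₗ[R] N')
    (m : M) (n : N) : rTensorMap R M f (tmk R M N m n) = tmk R M N' m (f n) := by
  unfold rTensorMap tmk
  erw [Submodule.mapQ_apply]
  rfl

/-- every element of `RTensor` is a finite sum of pure tensor classes. -/
lemma exists_rep (z : RTensor R M N) :
    ∃ (q : ℕ) (m : Fin q → M) (n : Fin q → N), z = ∑ i, tmk R M N (m i) (n i) := by
  obtain ⟨w, rfl⟩ := Submodule.Quotient.mk_surjective (balanceRel R M N) z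
  obtain ⟨S, rfl⟩ := TensorProduct.exists_finset w
  let e := S.equivFin
  refine ⟨S.card, fun i => ((e.symm i : M × N)).1, fun i => ((e.symm i : M × N)).2, ?_⟩
  rw [show ((Submodule.Quotient.mk (∑ i ∈ S, i.1 ⊗ₜ[ℤ] i.2) : (M ⊗[ℤ] N) ⧸ balanceRel R M N))
      = ∑ i ∈ S, tmk R M N i.1 i.2 from map_sum (Submodule.mkQ _) _ S]
  rw [← Finset.sum_attach S (fun i => tmk R M N i.1 i.2)]
  exact (Equiv.sum_comp e.symm _).symm

end basic

section left
variable (R)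
variable {M M' : Type u} [AddCommGroup M] [Module Rᵐᵒᵖ M] [AddCommGroup M'] [Module Rᵐᵒᵖ M']
variable (N : Type u) [AddCommGroup N] [Module R N]

/-- functoriality of `RTensor` in the first variable. -/
noncomputable def lTensorMap (g : M →ₗ[Rᵐᵒᵖ] M') : RTensor R M N →ₗ[ℤ] RTensor R M' N :=
  Submodule.mapQ (balanceRel R M N) (balanceRel R M' N)
    (TensorProduct.map (g.restrictScalars ℤ) LinearMap.id) (by
      refine Submodule.span_le.2 ?_
      rintro z ⟨m, r, n, rfl⟩
      rw [SetLike.mem_coe]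
      refine Submodule.mem_comap.2 ?_
      refine Submodule.subset_span ⟨g m, r, n, ?_⟩
      erw [map_sub, TensorProduct.map_tmul, TensorProduct.map_tmul]
      simp)

lemma lTensorMap_tmk (g : M →ₗ[Rᵐᵒᵖ] M') (m : M) (n : N) :
    lTensorMap R N g (tmk R M N m n) = tmk R M' N (g m) n := by
  unfold lTensorMap tmk
  erw [Submodule.mapQ_apply]
  rfl

lemma balance_map (g : M →ₗ[Rᵐᵒᵖ] M') (hg : Function.Surjective g) :
    Submodule.map (TensorProduct.map (g.restrictScalars ℤ) (LinearMap.id (M := N)))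
      (balanceRel R M N) = balanceRel R M' N := by
  unfold balanceRel
  erw [Submodule.map_span]
  apply le_antisymm
  · refine Submodule.span_le.2 ?_
    rintro z ⟨w, ⟨m, r, n, rfl⟩, rfl⟩
    refine Submodule.subset_span ⟨g m, r, n, ?_⟩
    simp [TensorProduct.map_tmul]
  · refine Submodule.span_le.2 ?_
    rintro z ⟨m', r, n, rfl⟩
    obtain ⟨m, rfl⟩ := hg m'
    refine Submodule.subset_span ⟨(MulOpposite.op r • m) ⊗ₜ[ℤ] n - m ⊗ₜ[ℤ] (r • n),
      ⟨m, r, n, rfl⟩, ?_⟩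
    simp [TensorProduct.map_tmul]

/-- middle exactness: an element of `RTensor R M N` killed by a surjection `g : M → M'`
(tensored with `N`) is a sum of pure tensor classes with first components in `ker g`. -/
lemma key_exact (g : M →ₗ[Rᵐᵒᵖ] M') (hg : Function.Surjective g) (u : M ⊗[ℤ] N)
    (hu : lTensorMap R N g (Submodule.Quotient.mk u) = 0) :
    ∃ (s : ℕ) (k : Fin s → M) (y : Fin s → N), (∀ j, g (k j) = 0) ∧
      (Submodule.Quotient.mk u : RTensor R M N) = ∑ j, tmk R M N (k j) (y j) := by
  set g' := g.restrictScalars ℤ with hg'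
  have hmem : (TensorProduct.map g' LinearMap.id) u ∈ balanceRel R M' N := by
    have := hu
    unfold lTensorMap at this
    erw [Submodule.mapQ_apply] at this
    erw [Submodule.Quotient.mk_eq_zero] at this; exact this
  rw [← balance_map R N g hg] at hmem
  obtain ⟨v, hv, hveq⟩ := hmem
  have hker : (TensorProduct.map g' LinearMap.id) (u - v) = 0 := by
    rw [map_sub, hveq, sub_self]
  have hexact : Function.Exact (LinearMap.rTensor N (LinearMap.ker g').subtype)
      (LinearMap.rTensor N g') :=
    rTensor_exact (M := ↥(LinearMap.ker g')) N
      (g'.exact_subtype_ker_map) (fun x => hg x)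
  have : LinearMap.rTensor N g' (u - v) = 0 := hker
  obtain ⟨w, hw⟩ := (hexact (u - v)).mp this
  obtain ⟨S, rfl⟩ := TensorProduct.exists_finset w
  let e := S.equivFin
  refine ⟨S.card, fun j => ((e.symm j).val.fst : M), fun j => (e.symm j).val.snd,
    fun j => (e.symm j).val.fst.2, ?_⟩
  have hmk : (Submodule.Quotient.mk u : RTensor R M N) = Submodule.Quotient.mk (u - v) := by
    rw [Submodule.Quotient.eq]
    simpa using (show v ∈ balanceRel R M N from hv)
  rw [hmk, ← hw]
  rw [map_sum]
  have : ∀ p : (LinearMap.ker g') × N, LinearMap.rTensor N (LinearMap.ker g').subtype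
      (p.1 ⊗ₜ[ℤ] p.2) = (p.1 : M) ⊗ₜ[ℤ] p.2 := fun p => rfl
  rw [show ((Submodule.Quotient.mk (∑ p ∈ S, LinearMap.rTensor N (LinearMap.ker g').subtype
      (p.1 ⊗ₜ[ℤ] p.2)) : (M ⊗[ℤ] N) ⧸ balanceRel R M N))
      = ∑ p ∈ S, tmk R M N (p.1 : M) p.2 from by
    rw [show (∑ p ∈ S, LinearMap.rTensor N (LinearMap.ker g').subtype (p.1 ⊗ₜ[ℤ] p.2))
        = ∑ p ∈ S, ((p.1 : M) ⊗ₜ[ℤ] p.2) from Finset.sum_congr rfl fun p _ => this p]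
    exact map_sum (Submodule.mkQ _) _ S]
  rw [← Finset.sum_attach S (fun p => tmk R M N (p.1 : M) p.2)]
  exact (Equiv.sum_comp e.symm _).symm

end left

section L1
variable (R)
variable {M : Type u} [AddCommGroup M] [Module Rᵐᵒᵖ M]
variable {X : Type u} [AddCommGroup X] [Module R X]

/-- the coordinate map `(ι →₀ Rᵐᵒᵖ) ⊗[ℤ] X → X` at index `a`. -/
noncomputable def coordMap (ι : Type u) (a : ι) : ((ι →₀ Rᵐᵒᵖ) ⊗[ℤ] X) →ₗ[ℤ] X :=
  TensorProduct.lift (LinearMap.mk₂ ℤ (fun f x => (f a).unop • x)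
    (fun f f' x => by simp [add_smul])
    (fun z f x => by
      simp only [Finsupp.smul_apply, MulOpposite.unop_smul, smul_assoc])
    (fun f x x' => by simp [smul_add])
    (fun z f x => by rw [smul_comm]))

lemma coordMap_tmul (ι : Type u) (a : ι) (f : ι →₀ Rᵐᵒᵖ) (x : X) :
    coordMap R ι a (f ⊗ₜ[ℤ] x) = (f a).unop • x := rfl

lemma coordMap_balance (ι : Type u) (a : ι) (w : (ι →₀ Rᵐᵒᵖ) ⊗[ℤ] X)
    (hw : w ∈ balanceRel R (ι →₀ Rᵐᵒᵖ) X) : coordMap R ι a w = 0 := by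
  have hle : balanceRel R (ι →₀ Rᵐᵒᵖ) X ≤ LinearMap.ker (coordMap R ι a) := by
    refine Submodule.span_le.2 ?_
    rintro z ⟨f, r, x, rfl⟩
    rw [SetLike.mem_coe, LinearMap.mem_ker, map_sub, coordMap_tmul, coordMap_tmul]
    rw [Finsupp.smul_apply, sub_eq_zero, smul_eq_mul, MulOpposite.unop_mul,
      MulOpposite.unop_op, mul_smul]
  exact hle hw

/-- The zero-tensor structure lemma for `RTensor`. -/
lemma L1 {ι : Type u} [Fintype ι] [DecidableEq ι] (m : ι → M) (x : ι → X)
    (h : ∑ i, tmk R M X (m i) (x i) = 0) :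
    ∃ (κ : Type u) (_ : Fintype κ) (s : ℕ) (mT : κ → M) (c : Fin s → (ι ⊕ κ) → R)
      (y : Fin s → X),
      (∀ i, x i = ∑ j, c j (Sum.inl i) • y j) ∧
      (∀ t, (0 : X) = ∑ j, c j (Sum.inr t) • y j) ∧
      (∀ j, ∑ a, (MulOpposite.op (c j a)) • (Sum.elim m mT a) = 0) := by
  classical
  set v : ι ⊕ M → M := Sum.elim m (fun m₀ => m₀) with hv
  set g : ((ι ⊕ M) →₀ Rᵐᵒᵖ) →ₗ[Rᵐᵒᵖ] M := Finsupp.linearCombination Rᵐᵒᵖ v with hgdef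
  have hgs : Function.Surjective g := fun m₀ => ⟨Finsupp.single (Sum.inr m₀) 1, by
    simp [hgdef, Finsupp.linearCombination_single, hv]⟩
  set u : ((ι ⊕ M) →₀ Rᵐᵒᵖ) ⊗[ℤ] X :=
    ∑ i, Finsupp.single (Sum.inl i) (1 : Rᵐᵒᵖ) ⊗ₜ[ℤ] x i with hu
  have hmku : (Submodule.Quotient.mk u : RTensor R ((ι ⊕ M) →₀ Rᵐᵒᵖ) X)
      = ∑ i, tmk R ((ι ⊕ M) →₀ Rᵐᵒᵖ) X (Finsupp.single (Sum.inl i) (1 : Rᵐᵒᵖ)) (x i) :=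
    map_sum (Submodule.mkQ _) _ _
  have h0 : lTensorMap R X g (Submodule.Quotient.mk u) = 0 := by
    rw [hmku, map_sum]
    have heach : ∀ i, lTensorMap R X g
        (tmk R ((ι ⊕ M) →₀ Rᵐᵒᵖ) X (Finsupp.single (Sum.inl i) (1 : Rᵐᵒᵖ)) (x i))
        = tmk R M X (m i) (x i) := fun i => by
      rw [lTensorMap_tmk]
      congr 1
      simp [hgdef, Finsupp.linearCombination_single, hv]
    rw [Finset.sum_congr rfl (fun i _ => heach i)]
    exact h
  obtain ⟨s, k, y, hker, hrep⟩ := key_exact R X g hgs u h0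
  have hbal : u - ∑ j, (k j) ⊗ₜ[ℤ] (y j) ∈ balanceRel R ((ι ⊕ M) →₀ Rᵐᵒᵖ) X := by
    rw [← Submodule.Quotient.eq]
    rw [hrep]
    exact (map_sum (Submodule.mkQ _) _ _).symm
  have hcoord : ∀ b, ∑ i, ((Finsupp.single (Sum.inl i) (1 : Rᵐᵒᵖ)) b).unop • x i
      = ∑ j, ((k j) b).unop • y j := by
    intro b
    have h1 := coordMap_balance R (ι ⊕ M) b _ hbal
    rw [map_sub, sub_eq_zero, map_sum, map_sum] at h1
    simp only [coordMap_tmul] at h1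
    exact h1
  set T : Finset M :=
    Finset.univ.biUnion (fun j : Fin s => (k j).support.image v) with hT
  refine ⟨{ m₀ // m₀ ∈ T }, inferInstance, s, Subtype.val,
    fun j a => ((k j) (Sum.map (fun i => i) Subtype.val a)).unop, y, ?_, ?_, ?_⟩
  · intro i
    have h1 := hcoord (Sum.inl i)
    rw [show ∑ i', ((Finsupp.single (Sum.inl i') (1 : Rᵐᵒᵖ)) (Sum.inl i)).unop • x i' = x i
      from ?_] at h1
    · exact h1
    · rw [Finset.sum_eq_single i (fun i' _ hne => by
        rw [Finsupp.single_eq_of_ne (by simpa using Ne.symm hne)]; simp) (by simp)]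
      simp
  · intro t
    have h1 := hcoord (Sum.inr (t : M))
    rw [show ∑ i', ((Finsupp.single (Sum.inl i') (1 : Rᵐᵒᵖ)) (Sum.inr (t : M))).unop • x i'
        = (0 : X) from by simp] at h1
    exact h1
  · intro j
    have hg0 : g (k j) = 0 := hker j
    rw [hgdef, Finsupp.linearCombination_apply, Finsupp.sum] at hg0
    set ext : ι ⊕ { m₀ // m₀ ∈ T } → ι ⊕ M := Sum.map (fun i => i) Subtype.val with hext
    have hinj : Function.Injective ext := by
      rintro (i1 | t1) (i2 | t2) h <;> simp [hext] at h <;> simp [h]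
    have hsub : (k j).support ⊆ Finset.image ext Finset.univ := by
      intro b hb
      rcases b with i | m₀
      · exact Finset.mem_image.2 ⟨Sum.inl i, Finset.mem_univ _, rfl⟩
      · have hmT : m₀ ∈ T := by
          rw [hT]
          exact Finset.mem_biUnion.2 ⟨j, Finset.mem_univ _,
            Finset.mem_image.2 ⟨Sum.inr m₀, hb, rfl⟩⟩
        exact Finset.mem_image.2 ⟨Sum.inr ⟨m₀, hmT⟩, Finset.mem_univ _, rfl⟩
    have key : ∑ a : ι ⊕ { m₀ // m₀ ∈ T }, (k j) (ext a) • v (ext a) = 0 := by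
      have himg : ∑ b ∈ Finset.image ext Finset.univ, (k j) b • v b
          = ∑ a : ι ⊕ { m₀ // m₀ ∈ T }, (k j) (ext a) • v (ext a) :=
        Finset.sum_image (fun a _ b _ h => hinj h)
      rw [← himg, ← Finset.sum_subset hsub (fun b _ hb => by
        rw [Finsupp.notMem_support_iff.1 hb, zero_smul])]
      exact hg0
    rw [← key]
    refine Finset.sum_congr rfl fun a _ => ?_
    rw [MulOpposite.op_unop]
    rcases a with i | t <;> rfl

end L1

section crit
variable (R)
variable (P : Type u) [AddCommGroup P] [Module Rᵐᵒᵖ P]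

/-- single-column equational criterion of flatness. -/
def Crit1 : Prop :=
  ∀ (ι : Type u) (_ : Fintype ι) (ν : ι → P) (b : ι → R),
    (∑ i, (MulOpposite.op (b i)) • ν i = 0) →
    ∃ (τ : Type u) (_ : Fintype τ) (μ : τ → P) (A : τ → ι → R),
      (∀ i, ν i = ∑ l, (MulOpposite.op (A l i)) • μ l) ∧
      (∀ l, ∑ i, A l i * b i = 0)

/-- multi-column equational criterion of flatness. -/
def Crit : Prop :=
  ∀ (ι : Type u) (_ : Fintype ι) (p : ℕ) (ν : ι → P) (C : ι → Fin p → R),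
    (∀ j, ∑ i, (MulOpposite.op (C i j)) • ν i = 0) →
    ∃ (τ : Type u) (_ : Fintype τ) (μ : τ → P) (A : τ → ι → R),
      (∀ i, ν i = ∑ l, (MulOpposite.op (A l i)) • μ l) ∧
      (∀ l j, ∑ i, A l i * C i j = 0)

lemma flat_to_crit1 (hflat : IsFlatRight R P) : Crit1 R P := by
  classical
  intro ι _ ν b hrel
  set I : Submodule R R := Submodule.span R (Set.range b) with hI
  have hb : ∀ i, b i ∈ I := fun i => Submodule.subset_span ⟨i, rfl⟩
  have hu0 : ∑ i, tmk R P ↥I (ν i) ⟨b i, hb i⟩ = 0 := by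
    have hinj := hflat ↥I R I.subtype (Submodule.injective_subtype I)
    have hmap : rTensorMap R P I.subtype (∑ i, tmk R P ↥I (ν i) ⟨b i, hb i⟩) = 0 := by
      rw [map_sum]
      have heach : ∀ i, rTensorMap R P I.subtype (tmk R P ↥I (ν i) ⟨b i, hb i⟩)
          = tmk R P R (MulOpposite.op (b i) • ν i) 1 := fun i => by
        rw [rTensorMap_tmk, tmk_balance]
        congr 1
        simp
      rw [Finset.sum_congr rfl fun i _ => heach i, ← tmk_sum_left, hrel, tmk_zero_left]
    have := hinj (a₂ := 0) (by rw [hmap, map_zero])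
    exact this
  obtain ⟨κ, _, s, mT, c, y, hx, hx0, hrelc⟩ :=
    L1 R ν (fun i => (⟨b i, hb i⟩ : ↥I)) hu0
  have hyI : ∀ j, (y j : R) ∈ Submodule.span R (Set.range b) := fun j => (y j).2
  choose d hd using fun j => (Submodule.mem_span_range_iff_exists_fun R).1 (hyI j)
  refine ⟨ι ⊕ κ, inferInstance, Sum.elim ν mT,
    fun a i => (if a = Sum.inl i then 1 else 0) - ∑ j, c j a * d j i, ?_, ?_⟩
  · intro i
    have h2 : ∀ a : ι ⊕ κ,
        (MulOpposite.op ((if a = Sum.inl i then (1:R) else 0) - ∑ j, c j a * d j i))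
          • Sum.elim ν mT a
        = MulOpposite.op (if a = Sum.inl i then (1:R) else 0) • Sum.elim ν mT a
          - ∑ j, MulOpposite.op (d j i) • (MulOpposite.op (c j a) • Sum.elim ν mT a) := by
      intro a
      rw [MulOpposite.op_sub, sub_smul,
        show MulOpposite.op (∑ j, c j a * d j i) = ∑ j, MulOpposite.op (c j a * d j i)
          from map_sum MulOpposite.opAddEquiv _ _, Finset.sum_smul]
      congr 1
      refine Finset.sum_congr rfl fun j _ => ?_
      rw [MulOpposite.op_mul, mul_smul]
    rw [Finset.sum_congr rfl fun a _ => h2 a, Finset.sum_sub_distrib]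
    rw [Finset.sum_comm]
    have hz : ∀ j ∈ (Finset.univ : Finset (Fin s)), ∑ a : ι ⊕ κ,
        MulOpposite.op (d j i) • (MulOpposite.op (c j a) • Sum.elim ν mT a) = 0 := by
      intro j _
      rw [← Finset.smul_sum, hrelc j, smul_zero]
    rw [Finset.sum_congr rfl hz, Finset.sum_const_zero, sub_zero]
    simp only [apply_ite MulOpposite.op, MulOpposite.op_one, MulOpposite.op_zero,
      ite_smul, one_smul, zero_smul, Finset.sum_ite_eq', Finset.mem_univ, if_true]
    rfl
  · intro a
    have h4 : ∀ i, ((if a = Sum.inl i then (1:R) else 0) - ∑ j, c j a * d j i) * b i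
        = (if a = Sum.inl i then (1:R) else 0) * b i - ∑ j, (c j a * d j i) * b i := by
      intro i
      rw [sub_mul, Finset.sum_mul]
    rw [Finset.sum_congr rfl fun i _ => h4 i, Finset.sum_sub_distrib]
    have h3 : ∑ i, (if a = Sum.inl i then (1:R) else 0) * b i
        = ∑ j, c j a * (y j : R) := by
      rcases a with i0 | t
      · rw [Finset.sum_eq_single i0 (fun i _ hne => by
          rw [if_neg (by simpa using (Ne.symm hne)), zero_mul]) (by simp)]
        rw [if_pos rfl, one_mul]
        have := congrArg (Subtype.val) (hx i0)
        simpa using this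
      · have := congrArg (Subtype.val) (hx0 t)
        simp only [Submodule.coe_sum, SetLike.val_smul, smul_eq_mul] at this
        simp only [reduceCtorEq, if_false, zero_mul, Finset.sum_const_zero]
        exact this
    rw [h3]
    rw [sub_eq_zero]
    rw [Finset.sum_comm]
    refine Finset.sum_congr rfl fun j _ => ?_
    rw [← hd j, Finset.mul_sum]
    refine Finset.sum_congr rfl fun i _ => ?_
    rw [smul_eq_mul, mul_assoc]

lemma op_sum_smul {α : Type*} [Fintype α] (f : α → R) (z : P) :
    MulOpposite.op (∑ a, f a) • z = ∑ a, MulOpposite.op (f a) • z := by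
  rw [show MulOpposite.op (∑ a, f a) = ∑ a, MulOpposite.op (f a)
    from map_sum MulOpposite.opAddEquiv _ _, Finset.sum_smul]

lemma op_mul_smul (r s : R) (z : P) :
    MulOpposite.op (r * s) • z = MulOpposite.op s • (MulOpposite.op r • z) := by
  rw [MulOpposite.op_mul, mul_smul]

lemma crit1_to_crit (h1 : Crit1 R P) : Crit R P := by
  have main : ∀ p : ℕ, ∀ (ι : Type u) (_ : Fintype ι) (ν : ι → P) (C : ι → Fin p → R),
      (∀ j, ∑ i, MulOpposite.op (C i j) • ν i = 0) →
      ∃ (τ : Type u) (_ : Fintype τ) (μ : τ → P) (A : τ → ι → R),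
        (∀ i, ν i = ∑ l, MulOpposite.op (A l i) • μ l) ∧
        (∀ l j, ∑ i, A l i * C i j = 0) := by
    intro p
    induction p with
    | zero =>
      intro ι _ ν C _
      classical
      refine ⟨ι, inferInstance, ν, fun l i => if l = i then 1 else 0, fun i => ?_,
        fun l j => Fin.elim0 j⟩
      simp [apply_ite MulOpposite.op, ite_smul, Finset.sum_ite_eq']
    | succ p ih =>
      intro ι _ ν C hrel
      obtain ⟨τ₁, _, μ₁, A₁, hA₁, hb₁⟩ :=
        h1 ι _ ν (fun i => C i (Fin.last p)) (hrel (Fin.last p))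
      set C₁ : τ₁ → Fin p → R := fun l j => ∑ i, A₁ l i * C i j.castSucc with hC₁def
      have hrel₁ : ∀ j, ∑ l, MulOpposite.op (C₁ l j) • μ₁ l = 0 := by
        intro j
        calc ∑ l, MulOpposite.op (C₁ l j) • μ₁ l
            = ∑ l, ∑ i, MulOpposite.op (C i j.castSucc) • (MulOpposite.op (A₁ l i) • μ₁ l) := by
              refine Finset.sum_congr rfl fun l _ => ?_
              rw [op_sum_smul]
              exact Finset.sum_congr rfl fun i _ => op_mul_smul R P _ _ _
          _ = ∑ i, ∑ l, MulOpposite.op (C i j.castSucc) • (MulOpposite.op (A₁ l i) • μ₁ l) :=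
              Finset.sum_comm
          _ = ∑ i, MulOpposite.op (C i j.castSucc) • (∑ l, MulOpposite.op (A₁ l i) • μ₁ l) :=
              Finset.sum_congr rfl fun i _ => (Finset.smul_sum).symm
          _ = 0 := by
              rw [Finset.sum_congr rfl fun i (_ : i ∈ Finset.univ) => by rw [← hA₁ i]]
              exact hrel j.castSucc
      obtain ⟨τ₂, _, μ₂, A₂, hA₂, hb₂⟩ := ih τ₁ _ μ₁ C₁ hrel₁
      refine ⟨τ₂, inferInstance, μ₂, fun k i => ∑ l, A₂ k l * A₁ l i, ?_, ?_⟩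
      · intro i
        calc ν i = ∑ l, MulOpposite.op (A₁ l i) • μ₁ l := hA₁ i
          _ = ∑ l, ∑ k, MulOpposite.op (A₂ k l * A₁ l i) • μ₂ k := by
              refine Finset.sum_congr rfl fun l _ => ?_
              rw [hA₂ l, Finset.smul_sum]
              exact Finset.sum_congr rfl fun k _ => (op_mul_smul R P _ _ _).symm
          _ = ∑ k, ∑ l, MulOpposite.op (A₂ k l * A₁ l i) • μ₂ k := Finset.sum_comm
          _ = ∑ k, MulOpposite.op (∑ l, A₂ k l * A₁ l i) • μ₂ k :=
              Finset.sum_congr rfl fun k _ => (op_sum_smul R P _ _).symm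
      · intro k j
        refine Fin.lastCases ?_ (fun j' => ?_) j
        · calc ∑ i, (∑ l, A₂ k l * A₁ l i) * C i (Fin.last p)
              = ∑ i, ∑ l, A₂ k l * (A₁ l i * C i (Fin.last p)) :=
                Finset.sum_congr rfl fun i _ => by
                  rw [Finset.sum_mul]
                  exact Finset.sum_congr rfl fun l _ => (mul_assoc _ _ _)
            _ = ∑ l, ∑ i, A₂ k l * (A₁ l i * C i (Fin.last p)) := Finset.sum_comm
            _ = ∑ l, A₂ k l * (∑ i, A₁ l i * C i (Fin.last p)) :=
                Finset.sum_congr rfl fun l _ => (Finset.mul_sum _ _ _).symm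
            _ = 0 := by
                rw [Finset.sum_congr rfl fun l (_ : l ∈ Finset.univ) => by rw [hb₁ l, mul_zero]]
                exact Finset.sum_const_zero
        · calc ∑ i, (∑ l, A₂ k l * A₁ l i) * C i j'.castSucc
              = ∑ i, ∑ l, A₂ k l * (A₁ l i * C i j'.castSucc) :=
                Finset.sum_congr rfl fun i _ => by
                  rw [Finset.sum_mul]
                  exact Finset.sum_congr rfl fun l _ => (mul_assoc _ _ _)
            _ = ∑ l, ∑ i, A₂ k l * (A₁ l i * C i j'.castSucc) := Finset.sum_comm
            _ = ∑ l, A₂ k l * C₁ l j' :=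
                Finset.sum_congr rfl fun l _ => (Finset.mul_sum _ _ _).symm
            _ = 0 := hb₂ k j'
  intro ι _ p ν C hrel
  exact main p ι _ ν C hrel

lemma exists_rep' {M N : Type u} [AddCommGroup M] [Module Rᵐᵒᵖ M] [AddCommGroup N]
    [Module R N] (z : RTensor R M N) :
    ∃ (ι : Type u) (_ : Fintype ι) (m : ι → M) (n : ι → N),
      z = ∑ i, tmk R M N (m i) (n i) := by
  obtain ⟨q, m, n, rfl⟩ := exists_rep R M N z
  exact ⟨ULift.{u} (Fin q), inferInstance, fun i => m i.down, fun i => n i.down,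
    (Equiv.sum_comp (Equiv.ulift (α := Fin q)).symm
      (fun i : ULift.{u} (Fin q) => tmk R M N (m i.down) (n i.down)))⟩

lemma crit_to_flat (hcrit : Crit R P) : IsFlatRight R P := by
  intro N N' _ _ _ _ f hf
  suffices hker : ∀ z : RTensor R P N, rTensorMap R P f z = 0 → z = 0 by
    intro a b hab
    have h := hker (a - b) (by rw [map_sub, hab, sub_self])
    exact sub_eq_zero.1 h
  intro z hz
  obtain ⟨ι, _, mv, nv, rfl⟩ := exists_rep' (R := R) z
  haveI := Classical.decEq ι
  have hz' : ∑ i, tmk R P N' (mv i) (f (nv i)) = 0 := by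
    rw [← Finset.sum_congr rfl fun i (_ : i ∈ Finset.univ) => rTensorMap_tmk R P N f
      (mv i) (nv i), ← map_sum, hz]
  obtain ⟨κ, _, s, mT, c, y, hx, hx0, hrelc⟩ := L1 R mv (fun i => f (nv i)) hz'
  obtain ⟨τ, _, μ, A, hA, hAC⟩ :=
    hcrit (ι ⊕ κ) inferInstance s (Sum.elim mv mT) (fun a j => c j a) hrelc
  have hAC' : ∀ l j, ∑ i, A l (Sum.inl i) * c j (Sum.inl i)
      = - ∑ t, A l (Sum.inr t) * c j (Sum.inr t) := by
    intro l j
    have h := hAC l j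
    rw [Fintype.sum_sum_type] at h
    exact eq_neg_of_add_eq_zero_left h
  have hn0 : ∀ l, (∑ i, A l (Sum.inl i) • nv i) = 0 := by
    intro l
    apply hf
    rw [map_zero, map_sum]
    calc ∑ i, f (A l (Sum.inl i) • nv i)
        = ∑ i, A l (Sum.inl i) • (∑ j, c j (Sum.inl i) • y j) :=
          Finset.sum_congr rfl fun i _ => by rw [map_smul, hx i]
      _ = ∑ i, ∑ j, (A l (Sum.inl i) * c j (Sum.inl i)) • y j :=
          Finset.sum_congr rfl fun i _ => by
            rw [Finset.smul_sum]
            exact Finset.sum_congr rfl fun j _ => (mul_smul _ _ _).symm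
      _ = ∑ j, ∑ i, (A l (Sum.inl i) * c j (Sum.inl i)) • y j := Finset.sum_comm
      _ = ∑ j, (∑ i, A l (Sum.inl i) * c j (Sum.inl i)) • y j :=
          Finset.sum_congr rfl fun j _ => (Finset.sum_smul).symm
      _ = ∑ j, (- ∑ t, A l (Sum.inr t) * c j (Sum.inr t)) • y j :=
          Finset.sum_congr rfl fun j _ => by rw [hAC' l j]
      _ = - ∑ j, ∑ t, (A l (Sum.inr t) * c j (Sum.inr t)) • y j := by
          rw [← Finset.sum_neg_distrib]
          exact Finset.sum_congr rfl fun j _ => by rw [neg_smul, Finset.sum_smul]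
      _ = - ∑ t, A l (Sum.inr t) • (∑ j, c j (Sum.inr t) • y j) := by
          rw [Finset.sum_comm]
          congr 1
          exact Finset.sum_congr rfl fun t _ => by
            rw [Finset.smul_sum]
            exact Finset.sum_congr rfl fun j _ => (mul_smul _ _ _)
      _ = 0 := by
          rw [Finset.sum_congr rfl fun t (_ : t ∈ Finset.univ) => by
            rw [← hx0 t, smul_zero]]
          rw [Finset.sum_const_zero, neg_zero]
  calc ∑ i, tmk R P N (mv i) (nv i)
      = ∑ i, ∑ l, tmk R P N (MulOpposite.op (A l (Sum.inl i)) • μ l) (nv i) := by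
        refine Finset.sum_congr rfl fun i _ => ?_
        rw [show mv i = Sum.elim mv mT (Sum.inl i) from rfl, hA (Sum.inl i), tmk_sum_left]
    _ = ∑ i, ∑ l, tmk R P N (μ l) (A l (Sum.inl i) • nv i) :=
        Finset.sum_congr rfl fun i _ => Finset.sum_congr rfl fun l _ =>
          tmk_balance R P N (μ l) _ (nv i)
    _ = ∑ l, ∑ i, tmk R P N (μ l) (A l (Sum.inl i) • nv i) := Finset.sum_comm
    _ = ∑ l, tmk R P N (μ l) (∑ i, A l (Sum.inl i) • nv i) :=
        (Finset.sum_congr rfl fun l _ => (tmk_sum_right R P N _ _ _).symm)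
    _ = 0 := by
        rw [Finset.sum_congr rfl fun l (_ : l ∈ Finset.univ) => by
          rw [hn0 l, tmk_zero_right]]
        exact Finset.sum_const_zero

end crit

end WGDAux

theorem weakGlobalDim_le_one_of_weaklySemihereditary (R : Type u) [Ring R]
    (hwsh : ∀ (p q r : ℕ), 0 < p → 0 < q → 0 < r →
      ∀ (A : Matrix (Fin p) (Fin q) R) (B : Matrix (Fin q) (Fin r) R), A * B = 0 →
        ∃ E : Matrix (Fin q) (Fin q) R, E * E = E ∧ A * E = A ∧ E * B = 0) :
    WeakGlobalDimLE1 R := by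
  classical
  intro M _ _ hM N
  apply WGDAux.crit_to_flat
  apply WGDAux.crit1_to_crit
  intro ι _ ν b hrel
  have hrelM : ∑ i, MulOpposite.op (b i) • ((ν i : M)) = 0 := by
    have h := congrArg (Subtype.val) hrel
    simpa using h
  obtain ⟨τ, _, μ, A, hA, hAb⟩ :=
    WGDAux.flat_to_crit1 R M hM ι ‹_› (fun i => (ν i : M)) b hrelM
  by_cases hι : Nonempty ι
  · by_cases hτ : Nonempty τ
    · have hs : 0 < Fintype.card ι := Fintype.card_pos
      have ht : 0 < Fintype.card τ := Fintype.card_pos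
      set eι := Fintype.equivFin ι with heι
      set eτ := Fintype.equivFin τ with heτ
      set Amat : Matrix (Fin (Fintype.card τ)) (Fin (Fintype.card ι)) R :=
        Matrix.of (fun u v => A (eτ.symm u) (eι.symm v)) with hAmat
      set Bmat : Matrix (Fin (Fintype.card ι)) (Fin 1) R :=
        Matrix.of (fun v _ => b (eι.symm v)) with hBmat
      have hAB : Amat * Bmat = 0 := by
        ext u w
        rw [Matrix.mul_apply]
        simp only [hAmat, hBmat, Matrix.of_apply, Matrix.zero_apply]
        rw [Equiv.sum_comp eι.symm (fun i => A (eτ.symm u) i * b i)]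
        exact hAb (eτ.symm u)
      obtain ⟨E, _, hAE, hEB⟩ := hwsh _ _ 1 ht hs one_pos Amat Bmat hAB
      refine ⟨ι, inferInstance, ν, fun l i => E (eι l) (eι i), ?_, ?_⟩
      · intro i
        apply Subtype.val_injective
        have hcoe : (((∑ l, MulOpposite.op (E (eι l) (eι i)) • ν l : ↥N)) : M)
            = ∑ l, MulOpposite.op (E (eι l) (eι i)) • (ν l : M) := by
          simp
        rw [hcoe]
        have hAi : ∀ l, A l i = ∑ i', A l i' * E (eι i') (eι i) := by
          intro l
          have h1 : Amat (eτ l) (eι i) = ∑ v, Amat (eτ l) v * E v (eι i) := by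
            conv_lhs => rw [← hAE]
            rw [Matrix.mul_apply]
          have h2 : Amat (eτ l) (eι i) = A l i := by simp [hAmat]
          rw [h2] at h1
          rw [h1, ← Equiv.sum_comp eι (fun v => Amat (eτ l) v * E v (eι i))]
          refine Finset.sum_congr rfl fun i' _ => ?_
          simp [hAmat]
        calc ((ν i : M))
            = ∑ l, MulOpposite.op (A l i) • μ l := hA i
          _ = ∑ l, ∑ i', MulOpposite.op (E (eι i') (eι i)) • (MulOpposite.op (A l i') • μ l) := by
              refine Finset.sum_congr rfl fun l _ => ?_
              rw [hAi l, WGDAux.op_sum_smul]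
              exact Finset.sum_congr rfl fun i' _ => WGDAux.op_mul_smul R M _ _ _
          _ = ∑ i', ∑ l, MulOpposite.op (E (eι i') (eι i)) • (MulOpposite.op (A l i') • μ l) :=
              Finset.sum_comm
          _ = ∑ i', MulOpposite.op (E (eι i') (eι i)) • ((ν i' : M)) := by
              refine Finset.sum_congr rfl fun i' _ => ?_
              rw [← Finset.smul_sum, ← hA i']
      · intro l
        have h1 : (E * Bmat) (eι l) 0 = 0 := by rw [hEB]; rfl
        rw [Matrix.mul_apply] at h1
        rw [← Equiv.sum_comp eι (fun v => E (eι l) v * Bmat v 0)] at h1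
        rw [← h1]
        refine Finset.sum_congr rfl fun i _ => ?_
        simp [hBmat]
    · haveI : IsEmpty τ := not_nonempty_iff.1 hτ
      refine ⟨τ, inferInstance, isEmptyElim, isEmptyElim, ?_, isEmptyElim⟩
      intro i
      apply Subtype.val_injective
      have h0 : ((ν i : M)) = 0 := by rw [hA i, Finset.univ_eq_empty, Finset.sum_empty]
      rw [h0, Finset.univ_eq_empty, Finset.sum_empty]
      rfl
  · exact ⟨ι, inferInstance, ν, fun _ _ => 0,
      fun i => absurd ⟨i⟩ hι, fun l => by simp⟩
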